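/- Let 𝔑 be a monomial group with real powers, 𝔐 a subgroup of 𝔑 closed under real powers with a distinguished element x ∈ 𝔐 satisfying x ≻ 1, and set K := ℝ[[𝔐]], viewed as a subfield of ℝ[[𝔑]]. Let h ∈ ℝ[[𝔑]] with h > ℝ. Then every K-composition with h is a strongly ℝ-linear embedding of ordered fields K → ℝ[[𝔑]]. -/

import Mathlib

noncomputable section

open Classical

namespace LogHyp

universe u v w

/-- A subset of a totally ordered set is *well-based* if it contains no infinite
strictly increasing sequence. -/
def WellBased {M : Type u} [Preorder M] (S : Set M) : Prop :=
  ¬ ∃ f : ℕ → M, StrictMono f ∧ ∀ n, f n ∈ S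

theorem wellBased_isPWO {M : Type u} [LinearOrder M] {S : Set Mᵒᵈ}
    (h : WellBased (OrderDual.toDual ⁻¹' S)) : S.IsPWO := by
  rw [Set.isPWO_iff_isWF, Set.isWF_iff_no_descending_seq]
  intro f hf hmem
  exact h ⟨fun n => OrderDual.ofDual (f n), fun a b hab => hf hab, hmem⟩

/-- A family in a field of well-based series (series with monomials in `Mᵒᵈ`,
so that supports are well-based as subsets of `M`) is summable if the union of
the supports is well-based and each monomial lies in the support of only
finitely many members. -/
def IsSummable {M : Type u} [LinearOrder M] {R : Type v} [Zero R] {ι : Type w}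
    (f : ι → HahnSeries Mᵒᵈ R) : Prop :=
  WellBased (OrderDual.toDual ⁻¹' (⋃ i, (f i).support)) ∧
    ∀ g : Mᵒᵈ, {i | (f i).coeff g ≠ 0}.Finite

/-- The sum of a summable family (junk value `0` if the family is not summable). -/
noncomputable def famSum {M : Type u} [LinearOrder M] {R : Type v} [AddCommMonoid R] {ι : Type w}
    (f : ι → HahnSeries Mᵒᵈ R) : HahnSeries Mᵒᵈ R :=
  if h : IsSummable f then
    (⟨f, wellBased_isPWO h.1, h.2⟩ : HahnSeries.SummableFamily Mᵒᵈ R ι).hsum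
  else 0

/-- Strongly `k`-linear maps between fields of well-based series:
`k`-linear maps sending summable families to summable families, preserving sums. -/
def IsStronglyLinear {k : Type v} [Semiring k] {M : Type u} {N : Type w}
    [LinearOrder M] [LinearOrder N]
    (Φ : HahnSeries Mᵒᵈ k → HahnSeries Nᵒᵈ k) : Prop :=
  (∀ (c : k) (f : HahnSeries Mᵒᵈ k), Φ (c • f) = c • Φ f) ∧
  (∀ f g, Φ (f + g) = Φ f + Φ g) ∧
  ∀ {ι : Type u} (f : ι → HahnSeries Mᵒᵈ k), IsSummable f →
    IsSummable (fun i => Φ (f i)) ∧ Φ (famSum f) = famSum fun i => Φ (f i)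

/-- `f ≺ g`: the dominant monomial of `f` is smaller than that of `g`
(with `𝔡 0` below all monomials). -/
def prec {M : Type u} [LinearOrder M] {R : Type v} [Zero R]
    (f g : HahnSeries Mᵒᵈ R) : Prop :=
  g ≠ 0 ∧ ∀ m ∈ f.support, ∃ n ∈ g.support,
    (OrderDual.ofDual m : M) < OrderDual.ofDual n

/-- `f ⪯ g`: the dominant monomial of `f` is at most that of `g`. -/
def preceq {M : Type u} [LinearOrder M] {R : Type v} [Zero R]
    (f g : HahnSeries Mᵒᵈ R) : Prop :=
  ∀ m ∈ f.support, ∃ n ∈ g.support, (OrderDual.ofDual m : M) ≤ OrderDual.ofDual n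

/-- The coefficient of the dominant (i.e. maximal) monomial of `f` (0 for `f = 0`). -/
noncomputable def leadCoeff {M : Type u} [LinearOrder M] {k : Type v} [Zero k]
    (f : HahnSeries Mᵒᵈ k) : k :=
  if hf : f = 0 then 0
  else f.coeff (f.isWF_support.min (HahnSeries.support_nonempty_iff.mpr hf))

/-- `f > 0` for real well-based series: the leading coefficient is positive. -/
def SPos {M : Type u} [LinearOrder M] (f : HahnSeries Mᵒᵈ ℝ) : Prop := 0 < leadCoeff f

/-- The ordering of real well-based series: `f < g` iff `g - f` has positive
leading coefficient. -/
def SLt {M : Type u} [LinearOrder M] (f g : HahnSeries Mᵒᵈ ℝ) : Prop := SPos (g - f)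

/-- `f > ℝ` : `f` exceeds every real constant. -/
def gtR {M : Type u} [AddCommGroup M] [LinearOrder M] [IsOrderedAddMonoid M] (f : HahnSeries Mᵒᵈ ℝ) : Prop :=
  ∀ r : ℝ, SLt (HahnSeries.C r) f

/-- `log(1+ε) = ∑_{n≥1} (-1)^{n-1} ε^n / n`, for `ε ≺ 1`. -/
noncomputable def log1p {M : Type u} [AddCommGroup M] [LinearOrder M] [IsOrderedAddMonoid M] {k : Type v} [Field k]
    (ε : HahnSeries Mᵒᵈ k) : HahnSeries Mᵒᵈ k :=
  famSum fun n : ℕ => ((-1 : k) ^ n / ((n : k) + 1)) • ε ^ (n + 1)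

/-- `exp(ε) = ∑_{n≥0} ε^n / n!`, for `ε ≺ 1`. -/
noncomputable def expS {M : Type u} [AddCommGroup M] [LinearOrder M] [IsOrderedAddMonoid M] {k : Type v} [Field k]
    (f : HahnSeries Mᵒᵈ k) : HahnSeries Mᵒᵈ k :=
  famSum fun n : ℕ => ((n.factorial : k))⁻¹ • f ^ n

/-- The operator support of a linear operator: the smallest set `𝔖` of monomials with
`supp S(m) ⊆ 𝔖·m` for all monomials `m`. -/
def opSupport {M : Type u} [AddCommGroup M] [LinearOrder M] [IsOrderedAddMonoid M] {k : Type v} [Zero k] [One k]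
    (S : HahnSeries Mᵒᵈ k → HahnSeries Mᵒᵈ k) : Set Mᵒᵈ :=
  ⋃ m : Mᵒᵈ, (fun g => g - m) '' (S (HahnSeries.single m 1)).support



/-- The ordinals below `α`. -/
abbrev Idx (α : Ordinal.{0}) : Type 1 := {β : Ordinal.{0} // β < α}

/-- The monomial group `𝔏_{<α}`, written additively: a logarithmic hypermonomial
`ℓ^r = ∏_{β<α} ℓ_β^{r_β}` is identified with its exponent sequence `r`, and the
group is ordered lexicographically. -/
abbrev Mon (α : Ordinal.{0}) : Type 1 := Lex (Idx α → ℝ)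

/-- The field `𝕃_{<α} = ℝ[[𝔏_{<α}]]` of logarithmic hyperseries: well-based series
with real coefficients and monomials in `𝔏_{<α}` (we use the order dual so that
supports are well-based, i.e. reverse well-ordered, subsets of `𝔏_{<α}`). -/
abbrev LSeries (α : Ordinal.{0}) : Type 1 := HahnSeries (Mon α)ᵒᵈ ℝ

/-- The monomial `ℓ^r` as an element of the (dualised) monomial group. -/
def monExp (α : Ordinal.{0}) (r : Idx α → ℝ) : (Mon α)ᵒᵈ := OrderDual.toDual (toLex r)

/-- The monomial `ℓ^r` as an element of `𝕃_{<α}`. -/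
noncomputable def monS (α : Ordinal.{0}) (r : Idx α → ℝ) : LSeries α :=
  HahnSeries.single (monExp α r) 1

/-- The exponent sequence of the hyperlogarithm `ℓ_β`. -/
def ellExp (α β : Ordinal.{0}) : Idx α → ℝ := fun ρ => if ρ.1 = β then 1 else 0

/-- The hyperlogarithm `ℓ_β` as an element of `𝕃_{<α}` (for `β < α`). -/
noncomputable def ell (α β : Ordinal.{0}) : LSeries α := monS α (ellExp α β)

/-- The exponent sequence of `ℓ_β' = ∏_{ρ<β} ℓ_ρ⁻¹`. -/
def derExp (α β : Ordinal.{0}) : Idx α → ℝ := fun ρ => if ρ.1 < β then -1 else 0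

/-- The exponent sequence of `ℓ_β† = ∏_{ρ≤β} ℓ_ρ⁻¹`. -/
def dagExp (α β : Ordinal.{0}) : Idx α → ℝ := fun ρ => if ρ.1 ≤ β then -1 else 0

/-- `D` is *the* derivation of `𝕃_{<α}`: a strongly `ℝ`-linear derivation
with `D ℓ_β = ∏_{ρ<β} ℓ_ρ⁻¹` for all `β < α`. -/
def IsDerL (α : Ordinal.{0}) (D : LSeries α → LSeries α) : Prop :=
  IsStronglyLinear D ∧ (∀ f g, D (f * g) = f * D g + g * D f) ∧
    ∀ β : Ordinal.{0}, β < α → D (ell α β) = monS α (derExp α β)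

/-- The exponent sequence of the dominant monomial of `f` (0 if `f = 0`). -/
noncomputable def domExp (α : Ordinal.{0}) (f : LSeries α) : Idx α → ℝ :=
  if hf : f = 0 then 0
  else ofLex (OrderDual.ofDual
    (f.isWF_support.min (HahnSeries.support_nonempty_iff.mpr hf)))

/-- The logarithm on `𝕃_{<α}^{>0}` (`α` a limit ordinal):
`log (c·ℓ^r·(1+ε)) = ∑_β r_β ℓ_{β+1} + log c + ∑_{n≥1} (-1)^{n-1} ε^n/n`. -/
noncomputable def logFn (α : Ordinal.{0}) (f : LSeries α) : LSeries α :=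
  (famSum fun β : Idx α => domExp α f β • ell α (β.1 + 1))
    + HahnSeries.C (Real.log (leadCoeff f))
    + log1p (f * (HahnSeries.single (monExp α (domExp α f)) (leadCoeff f))⁻¹ - 1)

/-- The logarithmicity `λ_f`: the least `β` with `r_β ≠ 0`, where `𝔡(f) = ℓ^r`. -/
noncomputable def lambdaOf (α : Ordinal.{0}) (f : LSeries α) : Ordinal.{0} :=
  sInf {β : Ordinal.{0} | ∃ h : β < α, domExp α f ⟨β, h⟩ ≠ 0}

/-- The coefficient of `ω^δ` in the Cantor normal form of `μ`. -/
noncomputable def cnfCoeff (μ δ : Ordinal.{0}) : ℕ :=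
  Cardinal.toNat (Ordinal.card ((μ / Ordinal.omega0 ^ δ) % Ordinal.omega0))

/-- `λ_{g;ν}`: writing `λ_g = ω^{β₁}n₁ + ⋯ + ω^{β_k}n_k` in Cantor normal form,
this is `n_i` if `ν = ω^{β_i+1}`, and `0` for every other ordinal `ν`. -/
noncomputable def lambdaCoeff (α : Ordinal.{0}) (g : LSeries α) (ν : Ordinal.{0}) : ℕ :=
  if h : ∃ δ : Ordinal.{0}, ν = Ordinal.omega0 ^ (δ + 1) then
    cnfCoeff (lambdaOf α g) h.choose
  else 0

/-- A composition on `𝕃_{<α}` (axioms (CL1)–(CL5)); `C f g` is `f ∘ g`,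
subject to conditions only when the right argument is `> ℝ`. -/
def IsCompositionOp (α : Ordinal.{0}) (C : LSeries α → LSeries α → LSeries α) : Prop :=
  -- (CL1): for each g > ℝ, `f ↦ f ∘ g` is an ℝ-algebra homomorphism
  (∀ g, gtR g →
    C 1 g = 1 ∧
    (∀ f₁ f₂, C (f₁ + f₂) g = C f₁ g + C f₂ g) ∧
    (∀ f₁ f₂, C (f₁ * f₂) g = C f₁ g * C f₂ g) ∧
    (∀ c : ℝ, C (HahnSeries.C c) g = HahnSeries.C c)) ∧
  -- (CL2)
  (∀ f, C f (ell α 0) = f) ∧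
  (∀ g, gtR g → C (ell α 0) g = g) ∧
  -- (CL3)
  (∀ f g, gtR g → SPos f → C (logFn α f) g = logFn α (C f g)) ∧
  -- (CL4)
  (∀ g, gtR g → ∀ {ι : Type 1} (F : ι → LSeries α), IsSummable F →
    IsSummable (fun i => C (F i) g) ∧ C (famSum F) g = famSum fun i => C (F i) g) ∧
  -- (CL5)
  (∀ f g h, gtR g → gtR h → C (C f g) h = C f (C g h))

/-- A composition admits Taylor expansion if for `g > ℝ` and `h ≺ g` the family
`(f⁽ⁿ⁾∘g)·hⁿ/n!` is summable with sum `f∘(g+h)`. -/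
def AdmitsTaylor (α : Ordinal.{0}) (D : LSeries α → LSeries α)
    (C : LSeries α → LSeries α → LSeries α) : Prop :=
  ∀ f g h, gtR g → prec h g →
    IsSummable (fun n : ℕ => ((n.factorial : ℝ))⁻¹ • (C (D^[n] f) g * h ^ n)) ∧
    C f (g + h) = famSum fun n : ℕ => ((n.factorial : ℝ))⁻¹ • (C (D^[n] f) g * h ^ n)

/-- The hyperlogarithm identities for a composition on `𝕃_{<ω^λ}`. -/
def HyperlogIds (lam : Ordinal.{0})
    (C : LSeries (Ordinal.omega0 ^ lam) → LSeries (Ordinal.omega0 ^ lam) →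
      LSeries (Ordinal.omega0 ^ lam)) : Prop :=
  (∀ β γ : Ordinal.{0}, β < lam → γ < Ordinal.omega0 ^ (β + 1) →
      C (ell (Ordinal.omega0 ^ lam) γ) (ell (Ordinal.omega0 ^ lam) (Ordinal.omega0 ^ β))
        = ell (Ordinal.omega0 ^ lam) (Ordinal.omega0 ^ β + γ)) ∧
  (∀ β : Ordinal.{0}, β < lam →
      C (ell (Ordinal.omega0 ^ lam) (Ordinal.omega0 ^ (β + 1)))
          (ell (Ordinal.omega0 ^ lam) (Ordinal.omega0 ^ β))
        = ell (Ordinal.omega0 ^ lam) (Ordinal.omega0 ^ (β + 1)) - 1) ∧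
  (∀ β γ : Ordinal.{0}, β < γ → γ < lam → Order.IsSuccLimit γ →
      (C (ell (Ordinal.omega0 ^ lam) (Ordinal.omega0 ^ γ))
          (ell (Ordinal.omega0 ^ lam) (Ordinal.omega0 ^ β))).coeff 0 = 0)



-- #### Auxiliary lemmas #######################################################

theorem leadCoeff_eq_leadingCoeff {M' : Type*} [LinearOrder M'] {k : Type*} [Zero k]
    (f : HahnSeries M'ᵒᵈ k) : leadCoeff f = f.leadingCoeff := by
  unfold leadCoeff
  split_ifs with hf
  · subst hf; simp
  · rw [HahnSeries.leadingCoeff_of_ne_zero hf, HahnSeries.untop_orderTop_of_ne_zero hf]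

-- ### new material
section A
variable {M : Type u} [LinearOrder M] {R : Type v} {ι : Type w}

theorem isPWO_wellBased {S : Set Mᵒᵈ} (h : S.IsPWO) :
    WellBased (OrderDual.toDual ⁻¹' S) := by
  rintro ⟨f, hf, hmem⟩
  rw [Set.isPWO_iff_isWF, Set.isWF_iff_no_descending_seq] at h
  exact h (fun n => OrderDual.toDual (f n)) (fun a b hab => hf hab) hmem

variable [AddCommMonoid R]

theorem IsSummable.isPWO {f : ι → HahnSeries Mᵒᵈ R} (h : IsSummable f) :
    (⋃ i, (f i).support).IsPWO := wellBased_isPWO h.1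

theorem IsSummable.mk' {f : ι → HahnSeries Mᵒᵈ R} (h1 : (⋃ i, (f i).support).IsPWO)
    (h2 : ∀ g : Mᵒᵈ, {i | (f i).coeff g ≠ 0}.Finite) : IsSummable f :=
  ⟨isPWO_wellBased h1, h2⟩

/-- Package a summable family as a mathlib `SummableFamily`. -/
def IsSummable.toFam {f : ι → HahnSeries Mᵒᵈ R} (h : IsSummable f) :
    HahnSeries.SummableFamily Mᵒᵈ R ι := ⟨f, h.isPWO, h.2⟩

@[simp] theorem IsSummable.coe_toFam {f : ι → HahnSeries Mᵒᵈ R} (h : IsSummable f) :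
    ⇑h.toFam = f := rfl

theorem isSummable_coe (s : HahnSeries.SummableFamily Mᵒᵈ R ι) : IsSummable ⇑s :=
  IsSummable.mk' s.isPWO_iUnion_support s.finite_co_support

theorem famSum_eq {f : ι → HahnSeries Mᵒᵈ R} (h : IsSummable f) :
    famSum f = h.toFam.hsum := by
  rw [famSum, dif_pos h]
  rfl

theorem famSum_eq_hsum {f : ι → HahnSeries Mᵒᵈ R} (s : HahnSeries.SummableFamily Mᵒᵈ R ι)
    (hs : ⇑s = f) : famSum f = s.hsum := by
  subst hs
  rw [famSum_eq (isSummable_coe s)]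
  rfl

theorem famSum_coeff {f : ι → HahnSeries Mᵒᵈ R} (h : IsSummable f) (g : Mᵒᵈ) :
    (famSum f).coeff g = ∑ᶠ i, (f i).coeff g := by
  rw [famSum_eq h]; exact HahnSeries.SummableFamily.coeff_hsum

theorem support_famSum_subset {f : ι → HahnSeries Mᵒᵈ R} (h : IsSummable f) :
    (famSum f).support ⊆ ⋃ i, (f i).support := by
  rw [famSum_eq h]; exact HahnSeries.SummableFamily.support_hsum_subset

theorem IsSummable.of_le {f g : ι → HahnSeries Mᵒᵈ R} (hf : IsSummable f)
    (hle : ∀ i n, (g i).coeff n ≠ 0 → (f i).coeff n ≠ 0) : IsSummable g := by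
  have h1 : (⋃ i, (g i).support) ⊆ ⋃ i, (f i).support :=
    Set.iUnion_mono fun i m hm => hle i m hm
  exact IsSummable.mk' (hf.isPWO.mono h1) fun n => (hf.2 n).subset fun i hi => hle i n hi

theorem famSum_zero : famSum (fun _ : ι => (0 : HahnSeries Mᵒᵈ R)) = 0 := by
  have hs : IsSummable (fun _ : ι => (0 : HahnSeries Mᵒᵈ R)) :=
    isSummable_coe (0 : HahnSeries.SummableFamily Mᵒᵈ R ι)
  ext g
  rw [famSum_coeff hs]
  simp

theorem IsSummable.add {f g : ι → HahnSeries Mᵒᵈ R} (hf : IsSummable f) (hg : IsSummable g) :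
    IsSummable (fun i => f i + g i) := by
  have : ⇑(hf.toFam + hg.toFam) = fun i => f i + g i := by
    funext i; rfl
  exact this ▸ isSummable_coe _

theorem famSum_add {f g : ι → HahnSeries Mᵒᵈ R} (hf : IsSummable f) (hg : IsSummable g) :
    famSum (fun i => f i + g i) = famSum f + famSum g := by
  rw [famSum_eq hf, famSum_eq hg, ← HahnSeries.SummableFamily.hsum_add]
  exact famSum_eq_hsum _ (by funext i; rfl)

theorem IsSummable.rsmul {k : Type*} [Semiring k] {f : ι → HahnSeries Mᵒᵈ k} (hf : IsSummable f)
    (r : k) : IsSummable (fun i => r • f i) :=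
  hf.of_le fun i n hn => by
    intro h0
    apply hn
    rw [HahnSeries.coeff_smul, h0, smul_zero]

theorem famSum_rsmul {k : Type*} [Semiring k] {f : ι → HahnSeries Mᵒᵈ k} (hf : IsSummable f)
    (r : k) : famSum (fun i => r • f i) = r • famSum f := by
  ext g
  rw [famSum_coeff (hf.rsmul r), HahnSeries.coeff_smul, famSum_coeff hf]
  simp only [HahnSeries.coeff_smul]
  have hfin : (Function.support fun i => (f i).coeff g).Finite :=
    (hf.2 g).subset fun i hi => hi
  exact (smul_finsum' r hfin).symm

/-- Extension by zero preserves summability and sums. -/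
theorem isSummable_of_subtype {S : Set ι} {f : ι → HahnSeries Mᵒᵈ R}
    (hz : ∀ i ∉ S, f i = 0) (hs : IsSummable (fun i : S => f i)) :
    IsSummable f ∧ famSum f = famSum (fun i : S => f i) := by
  classical
  have hcoe : ⇑(hs.toFam.embDomain (Function.Embedding.subtype S)) = f := by
    funext i
    rw [HahnSeries.SummableFamily.embDomain_apply]
    split_ifs with h
    · have hspec : ((Classical.choose h : S) : ι) = i := Classical.choose_spec h
      show f _ = f i
      rw [hspec]
    · exact (hz i fun hi => h ⟨⟨i, hi⟩, rfl⟩).symm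
  constructor
  · exact hcoe ▸ isSummable_coe _
  · rw [famSum_eq_hsum _ hcoe, HahnSeries.SummableFamily.hsum_embDomain, famSum_eq hs]

theorem famSum_equiv {κ : Type*} (e : κ ≃ ι) {f : ι → HahnSeries Mᵒᵈ R} (hf : IsSummable f) :
    IsSummable (fun k => f (e k)) ∧ famSum (fun k => f (e k)) = famSum f := by
  have hcoe : ⇑(HahnSeries.SummableFamily.Equiv e.symm hf.toFam) = fun k => f (e k) := by
    funext k
    rfl
  constructor
  · exact hcoe ▸ isSummable_coe _
  · rw [famSum_eq_hsum _ hcoe, HahnSeries.SummableFamily.hsum_equiv, famSum_eq hf]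

set_option maxHeartbeats 1000000 in
/-- Flattening a doubly-indexed summable family. -/
theorem famSum_flatten {α : Type w} {β : Type v} {u : α → β → HahnSeries Mᵒᵈ R}
    (h : IsSummable (fun p : α × β => u p.1 p.2)) :
    (∀ a, IsSummable (u a)) ∧ IsSummable (fun a => famSum (u a)) ∧
      famSum (fun a => famSum (u a)) = famSum (fun p : α × β => u p.1 p.2) := by
  classical
  have hrow : ∀ a, IsSummable (u a) := by
    intro a
    refine IsSummable.mk' (h.isPWO.mono ?_) fun g => ?_
    · exact fun m hm => by
        obtain ⟨b, hb⟩ := Set.mem_iUnion.mp hm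
        exact Set.mem_iUnion.mpr ⟨(a, b), hb⟩
    · have := (h.2 g).image Prod.snd
      refine this.subset fun b hb => ?_
      exact ⟨(a, b), hb, rfl⟩
  have hcol : IsSummable (fun a => famSum (u a)) := by
    refine IsSummable.mk' (h.isPWO.mono ?_) fun g => ?_
    · intro m hm
      obtain ⟨a, ha⟩ := Set.mem_iUnion.mp hm
      obtain ⟨b, hb⟩ := Set.mem_iUnion.mp (support_famSum_subset (hrow a) ha)
      exact Set.mem_iUnion.mpr ⟨(a, b), hb⟩
    · have := (h.2 g).image Prod.fst
      refine this.subset fun a ha => ?_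
      rw [Set.mem_setOf_eq, famSum_coeff (hrow a)] at ha
      obtain ⟨b, hb⟩ : ∃ b, (u a b).coeff g ≠ 0 := by
        by_contra hc
        push_neg at hc
        exact ha (by simp [hc])
      exact ⟨(a, b), hb, rfl⟩
  refine ⟨hrow, hcol, ?_⟩
  ext g
  rw [famSum_coeff hcol, famSum_coeff h]
  have hP : {p : α × β | (u p.1 p.2).coeff g ≠ 0}.Finite := h.2 g
  set A : Finset α := hP.toFinset.image Prod.fst with hA
  set B : Finset β := hP.toFinset.image Prod.snd with hB
  have hABs : (Function.support fun p : α × β => (u p.1 p.2).coeff g) ⊆ ↑(A ×ˢ B) := by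
    intro p hp
    simp only [Finset.coe_product, Set.mem_prod, hA, hB]
    constructor
    · exact Finset.mem_coe.mpr (Finset.mem_image.mpr ⟨p, hP.mem_toFinset.mpr hp, rfl⟩)
    · exact Finset.mem_coe.mpr (Finset.mem_image.mpr ⟨p, hP.mem_toFinset.mpr hp, rfl⟩)
  have hout : (Function.support fun a => ∑ᶠ b, (u a b).coeff g) ⊆ ↑A := by
    intro a ha
    have : ∃ b, (u a b).coeff g ≠ 0 := by
      by_contra hc
      push_neg at hc
      exact ha (by simp [hc])
    obtain ⟨b, hb⟩ := this
    exact Finset.mem_coe.mpr (Finset.mem_image.mpr ⟨(a, b), hP.mem_toFinset.mpr hb, rfl⟩)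
  have hin : ∀ a, (Function.support fun b => (u a b).coeff g) ⊆ ↑B := by
    intro a b hb
    exact Finset.mem_coe.mpr (Finset.mem_image.mpr ⟨(a, b), hP.mem_toFinset.mpr hb, rfl⟩)
  calc (∑ᶠ a, (famSum (u a)).coeff g) = ∑ᶠ a, ∑ᶠ b, (u a b).coeff g := by
        congr 1; funext a; exact famSum_coeff (hrow a) g
    _ = ∑ a ∈ A, ∑ᶠ b, (u a b).coeff g := finsum_eq_sum_of_support_subset _ hout
    _ = ∑ a ∈ A, ∑ b ∈ B, (u a b).coeff g := by
        refine Finset.sum_congr rfl fun a _ => ?_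
        exact finsum_eq_sum_of_support_subset _ (hin a)
    _ = ∑ p ∈ A ×ˢ B, (u p.1 p.2).coeff g := by rw [Finset.sum_product]
    _ = ∑ᶠ p : α × β, (u p.1 p.2).coeff g := (finsum_eq_sum_of_support_subset _ hABs).symm

theorem isSummable_unique {ι' : Type w} [Unique ι'] (f : ι' → HahnSeries Mᵒᵈ R) :
    IsSummable f := by
  refine IsSummable.mk' ((f default).isPWO_support.mono fun m hm => ?_)
    fun g => Set.toFinite _
  obtain ⟨i, hi⟩ := Set.mem_iUnion.mp hm
  rwa [Unique.eq_default i] at hi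

theorem famSum_unique {ι' : Type w} [Unique ι'] (f : ι' → HahnSeries Mᵒᵈ R) :
    famSum f = f default := by
  ext g
  rw [famSum_coeff (isSummable_unique f), finsum_unique]

theorem famSum_congr {f g : ι → HahnSeries Mᵒᵈ R} (h : f = g) : famSum f = famSum g := by rw [h]

end A

section A2
variable {M : Type u} [AddCommMonoid M] [LinearOrder M] [IsOrderedCancelAddMonoid M] {R : Type v} [CommRing R]
  {ι : Type w}

theorem famSum_mul_left {f : ι → HahnSeries Mᵒᵈ R} (hf : IsSummable f)
    (x : HahnSeries Mᵒᵈ R) :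
    IsSummable (fun i => x * f i) ∧ famSum (fun i => x * f i) = x * famSum f := by
  have hcoe : ⇑(x • hf.toFam) = fun i => x * f i := by
    funext i
    rw [HahnSeries.SummableFamily.smul_apply, HahnSeries.of_symm_smul_of_eq_mul]
    rfl
  exact ⟨hcoe ▸ isSummable_coe _,
    by rw [famSum_eq_hsum _ hcoe, HahnSeries.SummableFamily.hsum_smul, famSum_eq hf]⟩

theorem real_mul_smul_comm (r : R) (x y : HahnSeries Mᵒᵈ R) :
    x * (r • y) = r • (x * y) := by
  rw [← HahnSeries.C_mul_eq_smul, ← HahnSeries.C_mul_eq_smul, mul_left_comm]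

end A2

theorem real_zero_smul {M' : Type*} [LinearOrder M'] (x : HahnSeries M'ᵒᵈ ℝ) :
    (0 : ℝ) • x = 0 := by
  ext n; rw [HahnSeries.coeff_smul]; simp

theorem real_add_smul {M' : Type*} [LinearOrder M'] (a b : ℝ) (x : HahnSeries M'ᵒᵈ ℝ) :
    (a + b) • x = a • x + b • x := by
  ext n; rw [HahnSeries.coeff_add, HahnSeries.coeff_smul, HahnSeries.coeff_smul,
    HahnSeries.coeff_smul]; simp [add_mul]

theorem real_mul_smul {M' : Type*} [LinearOrder M'] (a b : ℝ) (x : HahnSeries M'ᵒᵈ ℝ) :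
    (a * b) • x = a • (b • x) := by
  ext n; rw [HahnSeries.coeff_smul, HahnSeries.coeff_smul, HahnSeries.coeff_smul]
  simp [mul_assoc]

section B
variable {N : Type} [AddCommGroup N] [LinearOrder N] [IsOrderedAddMonoid N] [Module ℝ N] {M : Submodule ℝ N}
variable {c : HahnSeries (↥M)ᵒᵈ ℝ → HahnSeries Nᵒᵈ ℝ}

/-- The fundamental representation of `c f` as a sum over all monomials. -/
theorem crep
    (hcsum : ∀ f : HahnSeries (↥M)ᵒᵈ ℝ,
      IsSummable (fun m : f.support => c (HahnSeries.single (m : (↥M)ᵒᵈ) 1)) ∧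
      c f = famSum fun m : f.support =>
        f.coeff (m : (↥M)ᵒᵈ) • c (HahnSeries.single (m : (↥M)ᵒᵈ) 1))
    (f : HahnSeries (↥M)ᵒᵈ ℝ) :
    IsSummable (fun m : (↥M)ᵒᵈ => f.coeff m • c (HahnSeries.single m 1)) ∧
      c f = famSum (fun m : (↥M)ᵒᵈ => f.coeff m • c (HahnSeries.single m 1)) := by
  have h2 : IsSummable (fun m : f.support =>
      f.coeff (m : (↥M)ᵒᵈ) • c (HahnSeries.single (m : (↥M)ᵒᵈ) 1)) := by
    refine (hcsum f).1.of_le fun i n hn => ?_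
    intro h0
    apply hn
    rw [HahnSeries.coeff_smul, h0, smul_zero]
  have hz : ∀ m ∉ f.support, f.coeff m • c (HahnSeries.single m 1) = 0 := by
    intro m hm
    rw [Function.notMem_support.mp hm]
    exact real_zero_smul _
  have h3 := isSummable_of_subtype hz h2
  exact ⟨h3.1, by rw [h3.2, ← (hcsum f).2]⟩

theorem c_zero
    (hcsum : ∀ f : HahnSeries (↥M)ᵒᵈ ℝ,
      IsSummable (fun m : f.support => c (HahnSeries.single (m : (↥M)ᵒᵈ) 1)) ∧
      c f = famSum fun m : f.support =>
        f.coeff (m : (↥M)ᵒᵈ) • c (HahnSeries.single (m : (↥M)ᵒᵈ) 1)) :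
    c 0 = 0 := by
  rw [(crep hcsum 0).2]
  rw [show (fun m : (↥M)ᵒᵈ => (0 : HahnSeries (↥M)ᵒᵈ ℝ).coeff m • c (HahnSeries.single m 1))
    = fun _ => 0 from funext fun m => by
      rw [HahnSeries.coeff_zero]; exact real_zero_smul _]
  exact famSum_zero

theorem c_add
    (hcsum : ∀ f : HahnSeries (↥M)ᵒᵈ ℝ,
      IsSummable (fun m : f.support => c (HahnSeries.single (m : (↥M)ᵒᵈ) 1)) ∧
      c f = famSum fun m : f.support =>
        f.coeff (m : (↥M)ᵒᵈ) • c (HahnSeries.single (m : (↥M)ᵒᵈ) 1))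
    (f g : HahnSeries (↥M)ᵒᵈ ℝ) : c (f + g) = c f + c g := by
  rw [(crep hcsum (f + g)).2, (crep hcsum f).2, (crep hcsum g).2]
  rw [show (fun m : (↥M)ᵒᵈ => (f + g).coeff m • c (HahnSeries.single m 1))
      = fun m : (↥M)ᵒᵈ => f.coeff m • c (HahnSeries.single m 1)
        + g.coeff m • c (HahnSeries.single m 1) from
    funext fun m => by rw [HahnSeries.coeff_add]; exact real_add_smul _ _ _]
  exact famSum_add (crep hcsum f).1 (crep hcsum g).1

theorem c_smul
    (hcsum : ∀ f : HahnSeries (↥M)ᵒᵈ ℝ,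
      IsSummable (fun m : f.support => c (HahnSeries.single (m : (↥M)ᵒᵈ) 1)) ∧
      c f = famSum fun m : f.support =>
        f.coeff (m : (↥M)ᵒᵈ) • c (HahnSeries.single (m : (↥M)ᵒᵈ) 1))
    (r : ℝ) (f : HahnSeries (↥M)ᵒᵈ ℝ) : c (r • f) = r • c f := by
  rw [(crep hcsum (r • f)).2, (crep hcsum f).2]
  rw [show (fun m : (↥M)ᵒᵈ => (r • f).coeff m • c (HahnSeries.single m 1))
      = fun m : (↥M)ᵒᵈ => r • (f.coeff m • c (HahnSeries.single m 1)) from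
    funext fun m => by rw [HahnSeries.coeff_smul]; exact real_mul_smul _ _ _]
  exact famSum_rsmul (crep hcsum f).1 r

theorem c_single
    (hcsum : ∀ f : HahnSeries (↥M)ᵒᵈ ℝ,
      IsSummable (fun m : f.support => c (HahnSeries.single (m : (↥M)ᵒᵈ) 1)) ∧
      c f = famSum fun m : f.support =>
        f.coeff (m : (↥M)ᵒᵈ) • c (HahnSeries.single (m : (↥M)ᵒᵈ) 1))
    (m0 : (↥M)ᵒᵈ) (a : ℝ) :
    c (HahnSeries.single m0 a) = a • c (HahnSeries.single m0 1) := by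
  by_cases ha : a = 0
  · rw [ha, HahnSeries.single_eq_zero, c_zero hcsum, real_zero_smul]
  rw [(crep hcsum (HahnSeries.single m0 a)).2]
  have hz : ∀ m ∉ ({m0} : Set (↥M)ᵒᵈ),
      (HahnSeries.single m0 a).coeff m • c (HahnSeries.single m 1) = 0 := by
    intro m hm
    rw [HahnSeries.coeff_single_of_ne hm]
    exact real_zero_smul _
  have hsub := isSummable_of_subtype hz (isSummable_unique _)
  rw [hsub.2, famSum_unique]
  show (HahnSeries.single m0 a).coeff _ • _ = _
  rw [show ((default : ({m0} : Set (↥M)ᵒᵈ)) : (↥M)ᵒᵈ) = m0 from rfl,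
    HahnSeries.coeff_single_same]

/-- Operator summability over an arbitrary PWO set of monomials. -/
theorem key
    (hcsum : ∀ f : HahnSeries (↥M)ᵒᵈ ℝ,
      IsSummable (fun m : f.support => c (HahnSeries.single (m : (↥M)ᵒᵈ) 1)) ∧
      c f = famSum fun m : f.support =>
        f.coeff (m : (↥M)ᵒᵈ) • c (HahnSeries.single (m : (↥M)ᵒᵈ) 1))
    {S : Set (↥M)ᵒᵈ} (hS : S.IsPWO) :
    (⋃ m ∈ S, (c (HahnSeries.single m 1)).support).IsPWO ∧
      ∀ n : Nᵒᵈ, {m : (↥M)ᵒᵈ | m ∈ S ∧ (c (HahnSeries.single m 1)).coeff n ≠ 0}.Finite := by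
  classical
  have hsupp : Function.support (fun m : (↥M)ᵒᵈ => if m ∈ S then (1 : ℝ) else 0) = S := by
    ext m; by_cases h : m ∈ S <;> simp [h]
  let gS : HahnSeries (↥M)ᵒᵈ ℝ := ⟨fun m => if m ∈ S then 1 else 0, by rw [hsupp]; exact hS⟩
  have hgs : gS.support = S := hsupp
  have h1 := (hcsum gS).1
  constructor
  · have heq : (⋃ m ∈ S, (c (HahnSeries.single m 1)).support)
        = ⋃ m : gS.support, (c (HahnSeries.single (m : (↥M)ᵒᵈ) 1)).support := by
      rw [hgs]
      exact (Set.biUnion_eq_iUnion _ _)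
    rw [heq]
    exact h1.isPWO
  · intro n
    have h2 := h1.2 n
    refine (h2.image Subtype.val).subset fun m hm => ?_
    obtain ⟨hmS, hcne⟩ := hm
    exact ⟨⟨m, hgs.symm ▸ hmS⟩, hcne, rfl⟩

/-- Coefficients of `c f`. -/
theorem c_coeff
    (hcsum : ∀ f : HahnSeries (↥M)ᵒᵈ ℝ,
      IsSummable (fun m : f.support => c (HahnSeries.single (m : (↥M)ᵒᵈ) 1)) ∧
      c f = famSum fun m : f.support =>
        f.coeff (m : (↥M)ᵒᵈ) • c (HahnSeries.single (m : (↥M)ᵒᵈ) 1))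
    (f : HahnSeries (↥M)ᵒᵈ ℝ) (n : Nᵒᵈ) :
    (c f).coeff n = ∑ᶠ m : (↥M)ᵒᵈ, f.coeff m * (c (HahnSeries.single m 1)).coeff n := by
  rw [(crep hcsum f).2, famSum_coeff (crep hcsum f).1]
  simp only [HahnSeries.coeff_smul, smul_eq_mul]

/-- `c` sends summable families to summable families and preserves infinite sums. -/
theorem c_strongSum
    (hcsum : ∀ f : HahnSeries (↥M)ᵒᵈ ℝ,
      IsSummable (fun m : f.support => c (HahnSeries.single (m : (↥M)ᵒᵈ) 1)) ∧
      c f = famSum fun m : f.support =>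
        f.coeff (m : (↥M)ᵒᵈ) • c (HahnSeries.single (m : (↥M)ᵒᵈ) 1))
    {ι : Type w} (f : ι → HahnSeries (↥M)ᵒᵈ ℝ) (hf : IsSummable f) :
    IsSummable (fun i => c (f i)) ∧ c (famSum f) = famSum fun i => c (f i) := by
  classical
  set S : Set (↥M)ᵒᵈ := ⋃ i, (f i).support with hSdef
  have hS : S.IsPWO := hf.isPWO
  obtain ⟨hU, hT⟩ := key hcsum hS
  -- existence of a contributing monomial
  have hex : ∀ (g : HahnSeries (↥M)ᵒᵈ ℝ) (n : Nᵒᵈ), (c g).coeff n ≠ 0 →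
      ∃ m, g.coeff m ≠ 0 ∧ (c (HahnSeries.single m 1)).coeff n ≠ 0 := by
    intro g n hn
    by_contra hc
    push_neg at hc
    apply hn
    rw [c_coeff hcsum]
    refine finsum_eq_zero_of_forall_eq_zero fun m => ?_
    by_cases h0 : g.coeff m = 0
    · rw [h0, zero_mul]
    · rw [hc m h0, mul_zero]
  -- support bound
  have hsupb : ∀ (g : HahnSeries (↥M)ᵒᵈ ℝ), g.support ⊆ S →
      (c g).support ⊆ ⋃ m ∈ S, (c (HahnSeries.single m 1)).support := by
    intro g hg n hn
    obtain ⟨m, hm1, hm2⟩ := hex g n hn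
    exact Set.mem_biUnion (hg hm1) hm2
  have hsummable : IsSummable (fun i => c (f i)) := by
    refine IsSummable.mk' (hU.mono ?_) fun n => ?_
    · refine Set.iUnion_subset fun i => hsupb (f i) fun m hm => Set.mem_iUnion.mpr ⟨i, hm⟩
    · refine (Set.Finite.biUnion (hT n) fun m _ => hf.2 m).subset fun i hi => ?_
      obtain ⟨m, hm1, hm2⟩ := hex (f i) n hi
      have hmS : m ∈ S := Set.mem_iUnion.mpr ⟨i, hm1⟩
      exact Set.mem_biUnion ⟨hmS, hm2⟩ hm1
  refine ⟨hsummable, ?_⟩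
  ext n
  rw [famSum_coeff hsummable, c_coeff hcsum]
  set Fc : (↥M)ᵒᵈ → ℝ := fun m => (c (HahnSeries.single m 1)).coeff n with hFc
  set A : Finset (↥M)ᵒᵈ := (hT n).toFinset with hA
  have hAmem : ∀ m : (↥M)ᵒᵈ, m ∈ A ↔ m ∈ S ∧ Fc m ≠ 0 := by
    intro m; rw [hA, Set.Finite.mem_toFinset]; rfl
  have hBfin : (⋃ m ∈ A, {i | (f i).coeff m ≠ 0}).Finite :=
    Set.Finite.biUnion A.finite_toSet fun m _ => hf.2 m
  set Bf : Finset ι := hBfin.toFinset with hBf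
  have hsuppf : ∀ i, (f i).support ⊆ S := fun i m hm => Set.mem_iUnion.mpr ⟨i, hm⟩
  calc (∑ᶠ m : (↥M)ᵒᵈ, (famSum f).coeff m * Fc m)
      = ∑ m ∈ A, (famSum f).coeff m * Fc m := by
        refine finsum_eq_sum_of_support_subset _ fun m hm => ?_
        have h1 : (famSum f).coeff m ≠ 0 := fun h => hm (by
          show (famSum f).coeff m * Fc m = 0
          rw [h, zero_mul])
        have h2 : Fc m ≠ 0 := fun h => hm (by
          show (famSum f).coeff m * Fc m = 0
          rw [h, mul_zero])
        have hmS : m ∈ S := support_famSum_subset hf h1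
        exact Finset.mem_coe.mpr ((hAmem m).mpr ⟨hmS, h2⟩)
    _ = ∑ m ∈ A, (∑ i ∈ Bf, (f i).coeff m) * Fc m := by
        refine Finset.sum_congr rfl fun m hm => ?_
        congr 1
        rw [famSum_coeff hf]
        refine finsum_eq_sum_of_support_subset _ fun i hi => ?_
        rw [hBf, Set.Finite.coe_toFinset]
        exact Set.mem_biUnion hm hi
    _ = ∑ m ∈ A, ∑ i ∈ Bf, (f i).coeff m * Fc m := by
        refine Finset.sum_congr rfl fun m _ => Finset.sum_mul _ _ _
    _ = ∑ i ∈ Bf, ∑ m ∈ A, (f i).coeff m * Fc m := Finset.sum_comm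
    _ = ∑ i ∈ Bf, (c (f i)).coeff n := by
        refine Finset.sum_congr rfl fun i _ => ?_
        rw [c_coeff hcsum]
        refine (finsum_eq_sum_of_support_subset _ fun m hm => ?_).symm
        have h1 : (f i).coeff m ≠ 0 := fun h => hm (by
          show (f i).coeff m * Fc m = 0
          rw [h, zero_mul])
        have h2 : Fc m ≠ 0 := fun h => hm (by
          show (f i).coeff m * Fc m = 0
          rw [h, mul_zero])
        exact Finset.mem_coe.mpr ((hAmem m).mpr ⟨hsuppf i h1, h2⟩)
    _ = ∑ᶠ i, (c (f i)).coeff n := by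
        refine (finsum_eq_sum_of_support_subset _ fun i hi => ?_).symm
        obtain ⟨m, hm1, hm2⟩ := hex (f i) n hi
        rw [hBf, Set.Finite.coe_toFinset]
        refine Set.mem_biUnion ?_ hm1
        exact (hAmem m).mpr ⟨hsuppf i hm1, hm2⟩

theorem c_mul
    (hcsum : ∀ f : HahnSeries (↥M)ᵒᵈ ℝ,
      IsSummable (fun m : f.support => c (HahnSeries.single (m : (↥M)ᵒᵈ) 1)) ∧
      c f = famSum fun m : f.support =>
        f.coeff (m : (↥M)ᵒᵈ) • c (HahnSeries.single (m : (↥M)ᵒᵈ) 1))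
    (hcmul : ∀ m₁ m₂ : (↥M)ᵒᵈ,
      c (HahnSeries.single (m₁ + m₂) 1)
        = c (HahnSeries.single m₁ 1) * c (HahnSeries.single m₂ 1))
    (f g : HahnSeries (↥M)ᵒᵈ ℝ) : c (f * g) = c f * c g := by
  classical
  set Fm : (↥M)ᵒᵈ → HahnSeries Nᵒᵈ ℝ := fun m => c (HahnSeries.single m 1) with hFm
  set e : (↥M)ᵒᵈ × (↥M)ᵒᵈ → HahnSeries (↥M)ᵒᵈ ℝ :=
    fun p => HahnSeries.single (p.1 + p.2) (f.coeff p.1 * g.coeff p.2) with he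
  have hmem : ∀ (p : (↥M)ᵒᵈ × (↥M)ᵒᵈ) (n : (↥M)ᵒᵈ), (e p).coeff n ≠ 0 →
      n = p.1 + p.2 ∧ f.coeff p.1 ≠ 0 ∧ g.coeff p.2 ≠ 0 := by
    intro p n hn
    rw [he] at hn
    simp only at hn
    rw [HahnSeries.coeff_single] at hn
    split_ifs at hn with hcase
    · exact ⟨hcase, fun h => hn (by rw [h, zero_mul]), fun h => hn (by rw [h, mul_zero])⟩
    · exact absurd rfl hn
  -- summability of the defining family of f * g
  have hes : IsSummable e := by
    refine IsSummable.mk' ((f.isPWO_support.add g.isPWO_support).mono ?_) fun m => ?_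
    · refine Set.iUnion_subset fun p n hn => ?_
      obtain ⟨h1, h2, h3⟩ := hmem p n hn
      rw [h1]
      exact Set.add_mem_add h2 h3
    · refine (Finset.addAntidiagonal f.isPWO_support g.isPWO_support m).finite_toSet.subset
        fun p hp => ?_
      obtain ⟨h1, h2, h3⟩ := hmem p m hp
      exact Finset.mem_coe.mpr (Finset.mem_addAntidiagonal.mpr ⟨h2, h3, h1.symm⟩)
  -- the sum of the family is f * g
  have hsum_e : famSum e = f * g := by
    ext m
    rw [famSum_coeff hes, HahnSeries.coeff_mul]
    rw [finsum_eq_sum_of_support_subset _ (s :=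
        Finset.addAntidiagonal f.isPWO_support g.isPWO_support m) fun p hp => ?_]
    · refine Finset.sum_congr rfl fun p hp => ?_
      obtain ⟨_, _, hpm⟩ := Finset.mem_addAntidiagonal.mp hp
      rw [he]
      show (HahnSeries.single (p.1 + p.2) (f.coeff p.1 * g.coeff p.2)).coeff m = _
      rw [← hpm, HahnSeries.coeff_single_same]
    · obtain ⟨h1, h2, h3⟩ := hmem p m hp
      exact Finset.mem_coe.mpr (Finset.mem_addAntidiagonal.mpr ⟨h2, h3, h1.symm⟩)
  -- push c through
  have h1 := c_strongSum hcsum e hes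
  have hv : (fun p : (↥M)ᵒᵈ × (↥M)ᵒᵈ => c (e p))
      = fun p => (f.coeff p.1 * g.coeff p.2) • Fm (p.1 + p.2) := by
    funext p
    rw [he, hFm]
    exact c_single hcsum _ _
  have hcfg : c (f * g) = famSum (fun p : (↥M)ᵒᵈ × (↥M)ᵒᵈ =>
      (f.coeff p.1 * g.coeff p.2) • Fm (p.1 + p.2)) := by
    rw [← hsum_e, h1.2, hv]
  have hvsummable : IsSummable (fun p : (↥M)ᵒᵈ × (↥M)ᵒᵈ =>
      (f.coeff p.1 * g.coeff p.2) • Fm (p.1 + p.2)) := hv ▸ h1.1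
  -- swap coordinates
  set u : (↥M)ᵒᵈ → (↥M)ᵒᵈ → HahnSeries Nᵒᵈ ℝ :=
    fun m2 m1 => (f.coeff m1 * g.coeff m2) • Fm (m1 + m2) with hu
  have hswap := famSum_equiv (Equiv.prodComm (↥M)ᵒᵈ (↥M)ᵒᵈ) hvsummable
  have huswap : (fun q : (↥M)ᵒᵈ × (↥M)ᵒᵈ =>
      (f.coeff ((Equiv.prodComm (↥M)ᵒᵈ (↥M)ᵒᵈ) q).1 * g.coeff ((Equiv.prodComm (↥M)ᵒᵈ (↥M)ᵒᵈ) q).2)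
        • Fm (((Equiv.prodComm (↥M)ᵒᵈ (↥M)ᵒᵈ) q).1 + ((Equiv.prodComm (↥M)ᵒᵈ (↥M)ᵒᵈ) q).2))
      = fun q : (↥M)ᵒᵈ × (↥M)ᵒᵈ => u q.1 q.2 := by
    funext q
    rw [hu]
    rfl
  have huncurry : IsSummable (fun q : (↥M)ᵒᵈ × (↥M)ᵒᵈ => u q.1 q.2) := huswap ▸ hswap.1
  have hflat := famSum_flatten huncurry
  -- identify the iterated sum with c f * c g
  have houter : ∀ m2 : (↥M)ᵒᵈ, famSum (u m2) = c f * (g.coeff m2 • Fm m2) := by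
    intro m2
    have hA := famSum_mul_left (crep hcsum f).1 (Fm m2)
    have hB := famSum_rsmul hA.1 (g.coeff m2)
    have hfun : (fun m1 => g.coeff m2 • (Fm m2 * (f.coeff m1 • Fm m1))) = u m2 := by
      funext m1
      rw [hu]
      simp only
      rw [real_mul_smul_comm _ _ _, hFm, ← hcmul m2 m1, add_comm m2 m1, ← real_mul_smul,
        mul_comm (g.coeff m2) (f.coeff m1)]
    calc famSum (u m2)
        = famSum (fun m1 => g.coeff m2 • (Fm m2 * (f.coeff m1 • Fm m1))) := by rw [hfun]
      _ = g.coeff m2 • (Fm m2 * famSum (fun m => f.coeff m • Fm m)) := by rw [hB, hA.2]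
      _ = c f * (g.coeff m2 • Fm m2) := by
          rw [← (crep hcsum f).2, real_mul_smul_comm _ _ _, mul_comm (c f) (Fm m2)]
  have hcfcg : c f * c g = famSum (fun m2 => famSum (u m2)) := by
    have hC := famSum_mul_left (crep hcsum g).1 (c f)
    calc c f * c g
        = c f * famSum (fun m => g.coeff m • Fm m) := by rw [← (crep hcsum g).2]
      _ = famSum (fun m2 => c f * (g.coeff m2 • Fm m2)) := hC.2.symm
      _ = famSum (fun m2 => famSum (u m2)) :=
          famSum_congr (funext fun m2 => (houter m2).symm)
  rw [hcfg, hcfcg, hflat.2.2]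
  have hfin := hswap.2
  rw [huswap] at hfin
  exact hfin.symm

theorem cF_unit (hc1 : c 1 = 1)
    (hcmul : ∀ m₁ m₂ : (↥M)ᵒᵈ,
      c (HahnSeries.single (m₁ + m₂) 1)
        = c (HahnSeries.single m₁ 1) * c (HahnSeries.single m₂ 1))
    (m : (↥M)ᵒᵈ) :
    c (HahnSeries.single m 1) * c (HahnSeries.single (-m) 1) = 1 := by
  rw [← hcmul m (-m), add_neg_cancel, HahnSeries.single_zero_one, hc1]

theorem cF_ne_zero (hc1 : c 1 = 1)
    (hcmul : ∀ m₁ m₂ : (↥M)ᵒᵈ,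
      c (HahnSeries.single (m₁ + m₂) 1)
        = c (HahnSeries.single m₁ 1) * c (HahnSeries.single m₂ 1))
    (m : (↥M)ᵒᵈ) : c (HahnSeries.single m 1) ≠ 0 := by
  intro h0
  have := cF_unit hc1 hcmul m
  rw [h0, zero_mul] at this
  exact zero_ne_one this

theorem cF_order_add (hc1 : c 1 = 1)
    (hcmul : ∀ m₁ m₂ : (↥M)ᵒᵈ,
      c (HahnSeries.single (m₁ + m₂) 1)
        = c (HahnSeries.single m₁ 1) * c (HahnSeries.single m₂ 1))
    (a b : (↥M)ᵒᵈ) :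
    (c (HahnSeries.single (a + b) 1)).order
      = (c (HahnSeries.single a 1)).order + (c (HahnSeries.single b 1)).order := by
  rw [hcmul a b]
  exact HahnSeries.order_mul (cF_ne_zero hc1 hcmul a) (cF_ne_zero hc1 hcmul b)

theorem cF_leadingCoeff_pos (hc1 : c 1 = 1)
    (hcmul : ∀ m₁ m₂ : (↥M)ᵒᵈ,
      c (HahnSeries.single (m₁ + m₂) 1)
        = c (HahnSeries.single m₁ 1) * c (HahnSeries.single m₂ 1))
    (m : (↥M)ᵒᵈ) : 0 < (c (HahnSeries.single m 1)).leadingCoeff := by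
  set h : (↥M)ᵒᵈ := OrderDual.toDual ((2⁻¹ : ℝ) • OrderDual.ofDual m) with hh
  have hhm : h + h = m := by
    show OrderDual.toDual ((2⁻¹ : ℝ) • OrderDual.ofDual m + (2⁻¹ : ℝ) • OrderDual.ofDual m) = m
    rw [← add_smul]
    norm_num
  have hsq : c (HahnSeries.single m 1)
      = c (HahnSeries.single h 1) * c (HahnSeries.single h 1) := by
    rw [← hcmul h h, hhm]
  have hne := cF_ne_zero hc1 hcmul h
  have hlead : (c (HahnSeries.single m 1)).leadingCoeff
      = (c (HahnSeries.single h 1)).leadingCoeff * (c (HahnSeries.single h 1)).leadingCoeff := by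
    rw [hsq, HahnSeries.leadingCoeff_eq, HahnSeries.order_mul hne hne,
      HahnSeries.coeff_mul_order_add_order]
  rw [hlead]
  exact mul_self_pos.mpr (HahnSeries.leadingCoeff_ne_zero.mpr hne)

theorem cF_order_pos (hc1 : c 1 = 1)
    (hcmul : ∀ m₁ m₂ : (↥M)ᵒᵈ,
      c (HahnSeries.single (m₁ + m₂) 1)
        = c (HahnSeries.single m₁ 1) * c (HahnSeries.single m₂ 1))
    (hcsum : ∀ f : HahnSeries (↥M)ᵒᵈ ℝ,
      IsSummable (fun m : f.support => c (HahnSeries.single (m : (↥M)ᵒᵈ) 1)) ∧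
      c f = famSum fun m : f.support =>
        f.coeff (m : (↥M)ᵒᵈ) • c (HahnSeries.single (m : (↥M)ᵒᵈ) 1))
    {a : (↥M)ᵒᵈ} (ha : 0 < a) : 0 < (c (HahnSeries.single a 1)).order := by
  classical
  set u := c (HahnSeries.single a 1) with hudef
  have hu : u ≠ 0 := cF_ne_zero hc1 hcmul a
  have hpow : ∀ n : ℕ, c (HahnSeries.single (n • a) 1) = u ^ n := by
    intro n
    induction n with
    | zero => rw [zero_nsmul, HahnSeries.single_zero_one, hc1, pow_zero]
    | succ k ih => rw [succ_nsmul, hcmul, ih, pow_succ, hudef]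
  have hsm : StrictMono (fun n : ℕ => n • a) := fun k l hkl => nsmul_lt_nsmul_left ha hkl
  set S : Set (↥M)ᵒᵈ := Set.range (fun n : ℕ => n • a) with hSdef
  have hS : S.IsPWO := by
    rw [hSdef, ← Set.image_univ]
    exact (Set.IsWF.of_wellFoundedLT (α := ℕ) Set.univ).isPWO.image_of_monotoneOn
      (hsm.monotone.monotoneOn _)
  have hsupp : Function.support (fun m : (↥M)ᵒᵈ => if m ∈ S then (1 : ℝ) else 0) = S := by
    ext m; by_cases h : m ∈ S <;> simp [h]
  let gS : HahnSeries (↥M)ᵒᵈ ℝ := ⟨fun m => if m ∈ S then 1 else 0, by rw [hsupp]; exact hS⟩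
  have hgs : gS.support = S := hsupp
  have h1 := (hcsum gS).1
  rcases lt_trichotomy (u.order) (0 : Nᵒᵈ) with hneg | heq | hpos
  · exfalso
    have hUwf := h1.isPWO.isWF
    rw [Set.isWF_iff_no_descending_seq] at hUwf
    refine hUwf (fun k => k • u.order) ?_ fun k => ?_
    · intro k l hkl
      have hlt : k • (-u.order) < l • (-u.order) :=
        nsmul_lt_nsmul_left (neg_pos.mpr hneg) hkl
      rw [neg_nsmul, neg_nsmul] at hlt
      exact neg_lt_neg_iff.mp hlt
    · refine Set.mem_iUnion.mpr ⟨⟨k • a, ?_⟩, ?_⟩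
      · rw [hgs]; exact ⟨k, rfl⟩
      · show k • u.order ∈ (c (HahnSeries.single (k • a) 1)).support
        rw [hpow k, ← HahnSeries.order_pow u k]
        exact (HahnSeries.coeff_order_eq_zero.not.mpr (pow_ne_zero k hu))
  · exfalso
    have hcoeff0 : ∀ n : ℕ, (u ^ n).coeff 0 ≠ 0 := by
      intro n
      have hordn : (u ^ n).order = 0 := by rw [HahnSeries.order_pow, heq, nsmul_zero]
      have := (HahnSeries.coeff_order_eq_zero.not.mpr (pow_ne_zero n hu))
      rwa [hordn] at this
    have hSinf : S.Infinite := Set.infinite_range_of_injective hsm.injective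
    have hginf : gS.support.Infinite := hgs ▸ hSinf
    haveI := hginf.to_subtype
    have hall : {i : gS.support | (c (HahnSeries.single (i : (↥M)ᵒᵈ) 1)).coeff 0 ≠ 0}
        = Set.univ := by
      refine Set.eq_univ_of_forall fun x => ?_
      have hx : (x : (↥M)ᵒᵈ) ∈ S := hgs ▸ x.2
      obtain ⟨n, hn⟩ := hx
      show (c (HahnSeries.single (x : (↥M)ᵒᵈ) 1)).coeff 0 ≠ 0
      rw [← hn, hpow n]
      exact hcoeff0 n
    have hfin := h1.2 0
    rw [hall] at hfin
    exact Set.infinite_univ hfin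
  · exact hpos

theorem cF_order_mono (hc1 : c 1 = 1)
    (hcmul : ∀ m₁ m₂ : (↥M)ᵒᵈ,
      c (HahnSeries.single (m₁ + m₂) 1)
        = c (HahnSeries.single m₁ 1) * c (HahnSeries.single m₂ 1))
    (hcsum : ∀ f : HahnSeries (↥M)ᵒᵈ ℝ,
      IsSummable (fun m : f.support => c (HahnSeries.single (m : (↥M)ᵒᵈ) 1)) ∧
      c f = famSum fun m : f.support =>
        f.coeff (m : (↥M)ᵒᵈ) • c (HahnSeries.single (m : (↥M)ᵒᵈ) 1))
    {a b : (↥M)ᵒᵈ} (hab : a < b) :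
    (c (HahnSeries.single a 1)).order < (c (HahnSeries.single b 1)).order := by
  have hposd : (0 : (↥M)ᵒᵈ) < b - a := sub_pos.mpr hab
  have h1 : (c (HahnSeries.single b 1)).order
      = (c (HahnSeries.single a 1)).order + (c (HahnSeries.single (b - a) 1)).order := by
    rw [← cF_order_add hc1 hcmul a (b - a), add_sub_cancel]
  rw [h1]
  exact lt_add_of_pos_right _ (cF_order_pos hc1 hcmul hcsum hposd)

/-- Leading term of `c f`. -/
theorem c_lead (hc1 : c 1 = 1)
    (hcmul : ∀ m₁ m₂ : (↥M)ᵒᵈ,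
      c (HahnSeries.single (m₁ + m₂) 1)
        = c (HahnSeries.single m₁ 1) * c (HahnSeries.single m₂ 1))
    (hcsum : ∀ f : HahnSeries (↥M)ᵒᵈ ℝ,
      IsSummable (fun m : f.support => c (HahnSeries.single (m : (↥M)ᵒᵈ) 1)) ∧
      c f = famSum fun m : f.support =>
        f.coeff (m : (↥M)ᵒᵈ) • c (HahnSeries.single (m : (↥M)ᵒᵈ) 1))
    {f : HahnSeries (↥M)ᵒᵈ ℝ} (hf : f ≠ 0) :
    c f ≠ 0 ∧ (c f).order = (c (HahnSeries.single f.order 1)).order ∧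
      (c f).leadingCoeff
        = f.leadingCoeff * (c (HahnSeries.single f.order 1)).leadingCoeff := by
  set m0 := f.order with hm0
  set n0 := (c (HahnSeries.single m0 1)).order with hn0
  have horder_le : ∀ m : (↥M)ᵒᵈ, f.coeff m ≠ 0 →
      n0 ≤ (c (HahnSeries.single m 1)).order := by
    intro m hm
    have h1 : m0 ≤ m := HahnSeries.order_le_of_coeff_ne_zero hm
    rcases eq_or_lt_of_le h1 with h2 | h2
    · rw [← h2]
    · exact (cF_order_mono hc1 hcmul hcsum h2).le
  have hsmall : ∀ n : Nᵒᵈ, n < n0 → (c f).coeff n = 0 := by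
    intro n hn
    rw [c_coeff hcsum]
    refine finsum_eq_zero_of_forall_eq_zero fun m => ?_
    by_cases h0 : f.coeff m = 0
    · rw [h0, zero_mul]
    · rw [HahnSeries.coeff_eq_zero_of_lt_order (lt_of_lt_of_le hn (horder_le m h0)), mul_zero]
  have hn0coeff : (c f).coeff n0 = f.coeff m0 * (c (HahnSeries.single m0 1)).coeff n0 := by
    rw [c_coeff hcsum]
    refine finsum_eq_single _ m0 fun m hm => ?_
    by_cases h0 : f.coeff m = 0
    · rw [h0, zero_mul]
    · have h1 : m0 < m :=
        lt_of_le_of_ne (HahnSeries.order_le_of_coeff_ne_zero h0) (Ne.symm hm)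
      rw [HahnSeries.coeff_eq_zero_of_lt_order
        (lt_of_lt_of_le (cF_order_mono hc1 hcmul hcsum h1)
          (le_refl _) |>.trans_le (le_refl _)), mul_zero]
  have hne0 : (c f).coeff n0 ≠ 0 := by
    rw [hn0coeff]
    exact mul_ne_zero ((HahnSeries.coeff_order_eq_zero.not.mpr hf))
      (by
        have := (HahnSeries.coeff_order_eq_zero.not.mpr (cF_ne_zero hc1 hcmul m0))
        rwa [← hn0] at this)
  have hcfne : c f ≠ 0 := HahnSeries.ne_zero_of_coeff_ne_zero hne0
  have hord : (c f).order = n0 := by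
    refine le_antisymm (HahnSeries.order_le_of_coeff_ne_zero hne0) ?_
    by_contra hlt
    push_neg at hlt
    exact (HahnSeries.coeff_order_eq_zero.not.mpr hcfne) (hsmall _ hlt)
  refine ⟨hcfne, hord, ?_⟩
  rw [HahnSeries.leadingCoeff_eq, hord, hn0coeff, HahnSeries.leadingCoeff_eq,
    HahnSeries.leadingCoeff_eq]

end B

/-- Let `𝔑` be a monomial group with real powers, `𝔐` a subgroup
closed under real powers, with a distinguished `x ∈ 𝔐`, `x ≻ 1`, and let
`h ∈ ℝ[[𝔑]]` with `h > ℝ`. Then every `K`-composition with `h` (for `K = ℝ[[𝔐]]`) is a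
strongly `ℝ`-linear embedding of ordered fields `K → ℝ[[𝔑]]`. -/
theorem statement16 {N : Type} [AddCommGroup N] [LinearOrder N] [IsOrderedAddMonoid N] [Module ℝ N]
    (M : Submodule ℝ N) (x : N) (hxM : x ∈ M) (hx : 0 < x)
    (h : HahnSeries Nᵒᵈ ℝ) (hh : gtR h)
    (c : HahnSeries (↥M)ᵒᵈ ℝ → HahnSeries Nᵒᵈ ℝ)
    (hc1 : c 1 = 1)
    (hcx : c (HahnSeries.single (OrderDual.toDual (⟨x, hxM⟩ : ↥M)) 1) = h)
    (hcmul : ∀ m₁ m₂ : (↥M)ᵒᵈ,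
      c (HahnSeries.single (m₁ + m₂) 1)
        = c (HahnSeries.single m₁ 1) * c (HahnSeries.single m₂ 1))
    (hcsum : ∀ f : HahnSeries (↥M)ᵒᵈ ℝ,
      IsSummable (fun m : f.support => c (HahnSeries.single (m : (↥M)ᵒᵈ) 1)) ∧
      c f = famSum fun m : f.support =>
        f.coeff (m : (↥M)ᵒᵈ) • c (HahnSeries.single (m : (↥M)ᵒᵈ) 1)) :
    IsStronglyLinear c ∧
    Function.Injective c ∧
    (∀ f g, c (f + g) = c f + c g) ∧
    (∀ f g, c (f * g) = c f * c g) ∧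
    (∀ f g, SLt f g ↔ SLt (c f) (c g)) := by
  have hadd := c_add hcsum
  have hsub : ∀ f g, c (f - g) = c f - c g := by
    intro f g
    have hneg : c (-g) = -(c g) := by
      have h1 : c g + c (-g) = 0 := by rw [← hadd, add_neg_cancel, c_zero hcsum]
      exact eq_neg_of_add_eq_zero_right h1
    rw [sub_eq_add_neg, hadd, hneg, sub_eq_add_neg]
  have hspos : ∀ f, SPos f ↔ SPos (c f) := by
    intro f
    by_cases hf : f = 0
    · subst hf
      rw [c_zero hcsum]
      unfold SPos
      rw [leadCoeff_eq_leadingCoeff, leadCoeff_eq_leadingCoeff,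
        HahnSeries.leadingCoeff_zero, HahnSeries.leadingCoeff_zero]
    · obtain ⟨hne, _, hlead⟩ := c_lead hc1 hcmul hcsum hf
      unfold SPos
      rw [leadCoeff_eq_leadingCoeff, leadCoeff_eq_leadingCoeff, hlead]
      have hpos := cF_leadingCoeff_pos hc1 hcmul f.order
      constructor
      · intro h1
        exact mul_pos h1 hpos
      · intro h1
        by_contra h2
        push_neg at h2
        nlinarith
  have hinj : Function.Injective c := by
    intro f g hfg
    by_contra hne
    have h0 : f - g ≠ 0 := sub_ne_zero.mpr hne
    exact (c_lead hc1 hcmul hcsum h0).1 (by rw [hsub, hfg, sub_self])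
  refine ⟨⟨c_smul hcsum, hadd, fun f hf => c_strongSum hcsum f hf⟩, hinj, hadd,
    c_mul hcsum hcmul, fun f g => ?_⟩
  show SPos (g - f) ↔ SPos (c g - c f)
  rw [← hsub g f]
  exact hspos (g - f)

end LogHyp
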